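/- If p is a real polynomial of degree n ≥ 1 all of whose roots are real and lie in [−1,1], then sup_{x∈[−1,1]} |p'(x)| ≥ (√n / 6) · sup_{x∈[−1,1]} |p(x)|. -/

import Mathlib

open Polynomial Set

lemma turan_aux_logderiv (t : Multiset ℝ) (y : ℝ) (hy : ∀ r ∈ t, y ≠ r) :
    Polynomial.eval y (Polynomial.derivative (t.map (fun r => X - C r)).prod)
      = Polynomial.eval y (t.map (fun r => X - C r)).prod
        * (t.map (fun r => (y - r)⁻¹)).sum := by
  induction t using Multiset.induction with
  | empty => simp
  | cons r t ih =>
    have hyr : y - r ≠ 0 := sub_ne_zero.mpr (hy r (Multiset.mem_cons_self r t))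
    have ih' := ih (fun s hs => hy s (Multiset.mem_cons_of_mem hs))
    simp only [Multiset.map_cons, Multiset.prod_cons, Multiset.sum_cons, derivative_mul,
      derivative_sub, derivative_X, derivative_C, sub_zero, one_mul, eval_add, eval_mul,
      eval_sub, eval_X, eval_C] at *
    rw [ih']
    field_simp

lemma turan_aux_mvt (p : Polynomial ℝ) (m : ℝ)
    (hm : ∀ y ∈ Set.Icc (-1:ℝ) 1, |(derivative p).eval y| ≤ m)
    (x ξ : ℝ) (hx : x ∈ Set.Icc (-1:ℝ) 1) (hξ : ξ ∈ Set.Icc (-1:ℝ) 1) :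
    |p.eval ξ - p.eval x| ≤ m * |ξ - x| := by
  rcases lt_trichotomy x ξ with h | h | h
  · obtain ⟨c, hc, hc'⟩ := exists_hasDerivAt_eq_slope (fun y => p.eval y)
      (fun y => (derivative p).eval y) h (p.continuous_aeval.continuousOn)
      (fun y _ => p.hasDerivAt y)
    have hne : ξ - x ≠ 0 := sub_ne_zero.mpr h.ne'
    rw [eq_div_iff hne] at hc'
    have hcI : c ∈ Set.Icc (-1:ℝ) 1 := ⟨hx.1.trans hc.1.le, hc.2.le.trans hξ.2⟩
    rw [← hc', abs_mul]
    exact mul_le_mul_of_nonneg_right (hm c hcI) (abs_nonneg _)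
  · simp [h]
  · obtain ⟨c, hc, hc'⟩ := exists_hasDerivAt_eq_slope (fun y => p.eval y)
      (fun y => (derivative p).eval y) h (p.continuous_aeval.continuousOn)
      (fun y _ => p.hasDerivAt y)
    have hne : x - ξ ≠ 0 := sub_ne_zero.mpr h.ne'
    rw [eq_div_iff hne] at hc'
    have hcI : c ∈ Set.Icc (-1:ℝ) 1 := ⟨hξ.1.trans hc.1.le, hc.2.le.trans hx.2⟩
    have : p.eval ξ - p.eval x = (derivative p).eval c * (ξ - x) := by linarith [hc']
    rw [this, abs_mul]
    exact mul_le_mul_of_nonneg_right (hm c hcI) (abs_nonneg _)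

lemma turan_aux_term (a b r : ℝ) (hab : a < b) (hr : r < a ∨ b < r)
    (ha : a ∈ Set.Icc (-1:ℝ) 1) (hb : b ∈ Set.Icc (-1:ℝ) 1) (hrI : r ∈ Set.Icc (-1:ℝ) 1) :
    (b - a) / 4 ≤ (a - r)⁻¹ - (b - r)⁻¹ := by
  have h4 : (a - r) * (b - r) ≤ 4 := by
    rcases hr with h | h
    · nlinarith [ha.2, hb.2, hrI.1]
    · nlinarith [ha.1, hb.1, hrI.2]
  have hpos : 0 < (a - r) * (b - r) := by
    rcases hr with h | h
    · nlinarith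
    · nlinarith
  have heq : (a - r)⁻¹ - (b - r)⁻¹ = (b - a) / ((a - r) * (b - r)) := by
    have h1 : a - r ≠ 0 := by rcases hr with h | h <;> nlinarith
    have h2 : b - r ≠ 0 := by rcases hr with h | h <;> nlinarith
    field_simp
    ring
  rw [heq]
  gcongr

/-- Turán's inequality for the interval `[-1,1]`. -/
theorem turan_interval (n : ℕ) (hn : 1 ≤ n) (p : Polynomial ℝ)
    (hdeg : p.natDegree = n)
    (hsplit : p.Splits)
    (hroots : ∀ x : ℝ, p.IsRoot x → x ∈ Set.Icc (-1 : ℝ) 1) :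
    (Real.sqrt n / 6) * sSup ((fun x => |p.eval x|) '' Set.Icc (-1 : ℝ) 1)
      ≤ sSup ((fun x => |(Polynomial.derivative p).eval x|) '' Set.Icc (-1 : ℝ) 1) := by
  have hp0 : p ≠ 0 := fun h => by rw [h] at hdeg; simp at hdeg; omega
  have hcomp : IsCompact (Set.Icc (-1:ℝ) 1) := isCompact_Icc
  have hne : (Set.Icc (-1:ℝ) 1).Nonempty := ⟨0, by norm_num⟩
  have hFc : ContinuousOn (fun x => |p.eval x|) (Set.Icc (-1:ℝ) 1) :=
    (p.continuous_aeval.abs).continuousOn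
  have hGc : ContinuousOn (fun x => |(derivative p).eval x|) (Set.Icc (-1:ℝ) 1) :=
    ((derivative p).continuous_aeval.abs).continuousOn
  obtain ⟨ξ, hξS, hξmax⟩ := hcomp.exists_isMaxOn hne hFc
  have hMeq : sSup ((fun x => |p.eval x|) '' Set.Icc (-1:ℝ) 1) = |p.eval ξ| :=
    IsGreatest.csSup_eq ⟨⟨ξ, hξS, rfl⟩, by rintro z ⟨x, hx, rfl⟩; exact hξmax hx⟩
  rw [hMeq]
  set M := |p.eval ξ| with hMdef
  set m := sSup ((fun x => |(derivative p).eval x|) '' Set.Icc (-1:ℝ) 1) with hmdef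
  have hmub : ∀ y ∈ Set.Icc (-1:ℝ) 1, |(derivative p).eval y| ≤ m := fun y hy =>
    le_csSup (hcomp.bddAbove_image hGc) ⟨y, hy, rfl⟩
  have hm0 : (0:ℝ) ≤ m := le_trans (abs_nonneg _) (hmub 0 (by norm_num))
  have hkey : ∀ x ∈ Set.Icc (-1:ℝ) 1, M - |p.eval x| ≤ m * |ξ - x| := by
    intro x hx
    have h1 := turan_aux_mvt p m hmub x ξ hx hξS
    have h2 := abs_sub_abs_le_abs_sub (p.eval ξ) (p.eval x)
    rw [hMdef]; linarith
  have hcard : p.roots.card = n := by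
    rw [← hdeg]; exact (Polynomial.splits_iff_card_roots.mp hsplit)
  have hrI : ∀ r ∈ p.roots, r ∈ Set.Icc (-1:ℝ) 1 := fun r hr =>
    hroots r ((Polynomial.mem_roots hp0).mp hr)
  have hr0 : ∀ r ∈ p.roots, p.eval r = 0 := fun r hr =>
    ((Polynomial.mem_roots hp0).mp hr)
  -- base bound: M ≤ 2 m
  obtain ⟨r0, hr0mem⟩ : ∃ r, r ∈ p.roots := by
    apply Multiset.exists_mem_of_ne_zero
    intro h; rw [h] at hcard; simp at hcard; omega
  have hbase : M ≤ 2 * m := by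
    have h1 := hkey r0 (hrI r0 hr0mem)
    rw [hr0 r0 hr0mem] at h1
    have h2 : |ξ - r0| ≤ 2 := by
      have := hξS.1; have := hξS.2
      have := (hrI r0 hr0mem).1; have := (hrI r0 hr0mem).2
      rw [abs_le]; constructor <;> linarith
    have h3 : m * |ξ - r0| ≤ m * 2 := mul_le_mul_of_nonneg_left h2 hm0
    simp at h1; linarith
  by_contra hcon
  push_neg at hcon
  have hsqpos : 0 < Real.sqrt n := Real.sqrt_pos.mpr (by exact_mod_cast hn)
  have hM0 : 0 < M := by nlinarith
  by_cases hn9 : (n:ℝ) ≤ 9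
  · have h3 : Real.sqrt n ≤ 3 := by
      have h := Real.sqrt_le_sqrt hn9
      rwa [show Real.sqrt 9 = 3 by
        rw [show (9:ℝ) = 3^2 by norm_num, Real.sqrt_sq (by norm_num)]] at h
    nlinarith
  · push_neg at hn9
    have hsq3 : 3 < Real.sqrt n := by
      have h := Real.sqrt_lt_sqrt (by norm_num) hn9
      rwa [show Real.sqrt 9 = 3 by
        rw [show (9:ℝ) = 3^2 by norm_num, Real.sqrt_sq (by norm_num)]] at h
    set δ := 3 / Real.sqrt n with hδdef
    have hδ0 : 0 < δ := by positivity
    have hδ1 : δ < 1 := by rw [hδdef, div_lt_one hsqpos]; exact hsq3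
    obtain ⟨a, b, hba, haI, hbI, hξab⟩ :
        ∃ a b : ℝ, b = a + δ ∧ a ∈ Set.Icc (-1:ℝ) 1 ∧ b ∈ Set.Icc (-1:ℝ) 1
          ∧ (ξ = a ∨ ξ = b) := by
      rcases le_or_gt ξ 0 with h | h
      · exact ⟨ξ, ξ + δ, rfl, hξS, ⟨by linarith [hξS.1], by linarith⟩, Or.inl rfl⟩
      · exact ⟨ξ - δ, ξ, by ring, ⟨by linarith, by linarith [hξS.2]⟩, hξS, Or.inr rfl⟩
    have hab : a < b := by rw [hba]; linarith
    have hmpos : 0 < m := by linarith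
    have hid : Real.sqrt n / 6 * (2 * δ) = 1 := by
      rw [hδdef]; field_simp; ring
    have hfar : ∀ r ∈ p.roots, 2 * δ < |ξ - r| := by
      intro r hr
      by_contra hle
      push_neg at hle
      have h1 := hkey r (hrI r hr)
      rw [hr0 r hr] at h1
      simp at h1
      have h2 : m * |ξ - r| ≤ m * (2 * δ) := mul_le_mul_of_nonneg_left hle hm0
      have h3 : m * (2 * δ) < (Real.sqrt n / 6 * M) * (2 * δ) :=
        mul_lt_mul_of_pos_right hcon (by positivity)
      have h4 : (Real.sqrt n / 6 * M) * (2 * δ) = M := by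
        rw [show (Real.sqrt n / 6 * M) * (2 * δ) = (Real.sqrt n / 6 * (2 * δ)) * M by ring,
          hid, one_mul]
      linarith
    have hξd : ∀ y, y = a ∨ y = b → |ξ - y| ≤ δ := by
      intro y hy
      rcases hξab with rfl | rfl <;> rcases hy with rfl | rfl <;>
        [skip; skip; skip; skip] <;>
      · rw [abs_le]; constructor <;> linarith
    have hside : ∀ r ∈ p.roots, r < a ∨ b < r := by
      intro r hr
      by_contra hc2
      push_neg at hc2
      have h1 := hfar r hr
      have h2 : |ξ - r| ≤ δ := by
        rcases hξab with rfl | rfl <;> (rw [abs_le]; constructor <;> linarith [hc2.1, hc2.2])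
      linarith
    have hbig : ∀ y, y = a ∨ y = b → M / 2 < |p.eval y| := by
      intro y hy
      have hyI : y ∈ Set.Icc (-1:ℝ) 1 := by rcases hy with rfl | rfl <;> assumption
      have h1 := hkey y hyI
      have h2 : m * |ξ - y| ≤ m * δ := mul_le_mul_of_nonneg_left (hξd y hy) hm0
      have h3 : m * δ < (Real.sqrt n / 6 * M) * δ := mul_lt_mul_of_pos_right hcon hδ0
      have h4 : (Real.sqrt n / 6 * M) * δ = M / 2 := by
        rw [hδdef]; field_simp; ring
      linarith
    set g : ℝ → ℝ := fun y => ((p.roots).map (fun r => (y - r)⁻¹)).sum with hgdef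
    have hlog : ∀ y, y = a ∨ y = b → (derivative p).eval y = p.eval y * g y := by
      intro y hy
      have hy0 : ∀ r ∈ p.roots, y ≠ r := by
        intro r hr heq
        have h1 := hbig y hy
        rw [heq, hr0 r hr] at h1
        simp at h1; linarith
      conv_lhs => rw [hsplit.eq_prod_roots]
      rw [derivative_C_mul, eval_mul, eval_C, turan_aux_logderiv _ y hy0]
      have : p.eval y = p.leadingCoeff * Polynomial.eval y ((p.roots.map fun r => X - C r).prod) := by
        conv_lhs => rw [hsplit.eq_prod_roots]
        rw [eval_mul, eval_C]
      rw [hgdef, this]; ring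
    have hgb : ∀ y, y = a ∨ y = b → M / 2 * |g y| ≤ m := by
      intro y hy
      have hyI : y ∈ Set.Icc (-1:ℝ) 1 := by rcases hy with rfl | rfl <;> assumption
      have h1 := hmub y hyI
      rw [hlog y hy, abs_mul] at h1
      have h2 := hbig y hy
      nlinarith [abs_nonneg (g y)]
    have hsum : (n:ℝ) * δ / 4 ≤ g a - g b := by
      have heq : g a - g b = ((p.roots).map (fun r => (a - r)⁻¹ - (b - r)⁻¹)).sum := by
        rw [hgdef]
        simp [Multiset.sum_map_sub]
      rw [heq]
      have hterm : ∀ x ∈ (p.roots).map (fun r => (a - r)⁻¹ - (b - r)⁻¹), δ / 4 ≤ x := by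
        intro x hx
        obtain ⟨r, hr, rfl⟩ := Multiset.mem_map.mp hx
        have := turan_aux_term a b r hab (hside r hr) haI hbI (hrI r hr)
        rw [hba] at this ⊢
        linarith [this]
      have h1 := Multiset.card_nsmul_le_sum hterm
      rw [Multiset.card_map, hcard, nsmul_eq_mul] at h1
      calc (n:ℝ) * δ / 4 = (n:ℝ) * (δ / 4) := by ring
        _ ≤ _ := h1
    have e1 : (n:ℝ) * δ / 4 = 3 * Real.sqrt n / 4 := by
      rw [hδdef]
      rw [show (n:ℝ) * (3 / Real.sqrt n) = 3 * ((n:ℝ) / Real.sqrt n) by ring,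
        Real.div_sqrt]
    have hga := hgb a (Or.inl rfl)
    have hgbb := hgb b (Or.inr rfl)
    have habs1 : g a ≤ |g a| := le_abs_self _
    have habs2 : -g b ≤ |g b| := neg_le_abs _
    -- M/2 * |g a| ≤ m < √n/6 * M  ⇒ |g a| < √n/3
    have hga2 : |g a| < Real.sqrt n / 3 := by nlinarith
    have hgb2 : |g b| < Real.sqrt n / 3 := by nlinarith
    rw [e1] at hsum
    linarith
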